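/- Let κ be a positive integer, let n = κ² + 1, and let A be an n×n (0,1)-matrix all of whose row sums and column sums equal κ. If Θ_κ^m(A) = A for some positive integer m, then A is J₂-free. -/
import Mathlib


open Matrix BigOperators

/-- The Hoffman–Singleton operator `Θ_κ(A) = (κ-1)·I_n + J_n - A·Aᵀ`. -/
def Theta (n : ℕ) (κ : ℤ) (A : Matrix (Fin n) (Fin n) ℤ) : Matrix (Fin n) (Fin n) ℤ :=
  (κ - 1) • (1 : Matrix (Fin n) (Fin n) ℤ) + Matrix.of (fun _ _ => (1 : ℤ)) - A * Aᵀ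

/-- A matrix is `J₂`-free if it has no all-one `2×2` submatrix. -/
def J2Free {n : ℕ} (M : Matrix (Fin n) (Fin n) ℤ) : Prop :=
  ¬ ∃ i l j k : Fin n, i ≠ l ∧ j ≠ k ∧ M i j = 1 ∧ M i k = 1 ∧ M l j = 1 ∧ M l k = 1

lemma theta_apply (n : ℕ) (κ : ℤ) (A : Matrix (Fin n) (Fin n) ℤ) (i j : Fin n) :
    Theta n κ A i j = (κ - 1) * (if i = j then 1 else 0) + 1 - ∑ s, A i s * A j s := by
  simp only [Theta, Matrix.sub_apply, Matrix.add_apply, Matrix.smul_apply, Matrix.one_apply,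
    Matrix.of_apply, Matrix.mul_apply, Matrix.transpose_apply, smul_eq_mul]

lemma self_le_mul_self (x : ℤ) : x ≤ x * x := by
  rcases le_or_gt x 0 with h | h
  · nlinarith
  · nlinarith

/-- Θ preserves row and column sums equal to κ. -/
lemma theta_sums (κ : ℕ) (B : Matrix (Fin (κ ^ 2 + 1)) (Fin (κ ^ 2 + 1)) ℤ)
    (hrow : ∀ i, ∑ j, B i j = (κ : ℤ)) (hcol : ∀ j, ∑ i, B i j = (κ : ℤ)) :
    (∀ i, ∑ j, Theta (κ ^ 2 + 1) (κ : ℤ) B i j = (κ : ℤ)) ∧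
    (∀ j, ∑ i, Theta (κ ^ 2 + 1) (κ : ℤ) B i j = (κ : ℤ)) := by
  have hcard : ((Finset.univ : Finset (Fin (κ ^ 2 + 1))).card : ℤ) = (κ : ℤ) ^ 2 + 1 := by
    rw [Finset.card_univ, Fintype.card_fin]
    push_cast
    ring
  constructor
  · intro i
    have h1 : ∑ j, ∑ s, B i s * B j s = (κ : ℤ) * κ := by
      rw [Finset.sum_comm]
      have : ∀ s, ∑ j, B i s * B j s = B i s * κ := by
        intro s
        rw [← Finset.mul_sum, hcol s]
      rw [Finset.sum_congr rfl (fun s _ => this s), ← Finset.sum_mul, hrow i]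
    calc ∑ j, Theta (κ ^ 2 + 1) (κ : ℤ) B i j
        = ∑ j, (((κ : ℤ) - 1) * (if i = j then 1 else 0) + 1 - ∑ s, B i s * B j s) := by
          exact Finset.sum_congr rfl (fun j _ => theta_apply _ _ _ _ _)
      _ = (∑ j, ((κ : ℤ) - 1) * (if i = j then 1 else 0)) + (∑ _j : Fin (κ ^ 2 + 1), (1 : ℤ))
            - ∑ j, ∑ s, B i s * B j s := by
          rw [Finset.sum_sub_distrib, Finset.sum_add_distrib]
      _ = ((κ : ℤ) - 1) + ((κ : ℤ) ^ 2 + 1) - (κ : ℤ) * κ := by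
          rw [h1]
          congr 1
          congr 1
          · simp
          · simpa using hcard
      _ = (κ : ℤ) := by ring
  · intro j
    have h1 : ∑ i, ∑ s, B i s * B j s = (κ : ℤ) * κ := by
      rw [Finset.sum_comm]
      have : ∀ s, ∑ i, B i s * B j s = (κ : ℤ) * B j s := by
        intro s
        rw [← Finset.sum_mul, hcol s]
      rw [Finset.sum_congr rfl (fun s _ => this s), ← Finset.mul_sum, hrow j]
    calc ∑ i, Theta (κ ^ 2 + 1) (κ : ℤ) B i j
        = ∑ i, (((κ : ℤ) - 1) * (if i = j then 1 else 0) + 1 - ∑ s, B i s * B j s) := by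
          exact Finset.sum_congr rfl (fun i _ => theta_apply _ _ _ _ _)
      _ = (∑ i, ((κ : ℤ) - 1) * (if i = j then 1 else 0)) + (∑ _i : Fin (κ ^ 2 + 1), (1 : ℤ))
            - ∑ i, ∑ s, B i s * B j s := by
          rw [Finset.sum_sub_distrib, Finset.sum_add_distrib]
      _ = ((κ : ℤ) - 1) + ((κ : ℤ) ^ 2 + 1) - (κ : ℤ) * κ := by
          rw [h1]
          congr 1
          congr 1
          · simp
          · simpa using hcard
      _ = (κ : ℤ) := by ring

/-- If `Θ(B)` is a 0–1 matrix and `B` has row sums κ, then `B` is a 0–1 matrix. -/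
lemma key_01 (κ : ℕ) (B : Matrix (Fin (κ ^ 2 + 1)) (Fin (κ ^ 2 + 1)) ℤ)
    (hrow : ∀ i, ∑ j, B i j = (κ : ℤ))
    (hθ : ∀ i j, Theta (κ ^ 2 + 1) (κ : ℤ) B i j = 0 ∨ Theta (κ ^ 2 + 1) (κ : ℤ) B i j = 1) :
    ∀ i j, B i j = 0 ∨ B i j = 1 := by
  intro i j
  have hdiag : Theta (κ ^ 2 + 1) (κ : ℤ) B i i
      = (κ : ℤ) - ∑ s, B i s * B i s := by
    rw [theta_apply, if_pos rfl]
    ring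
  have hge : (κ : ℤ) ≤ ∑ s, B i s * B i s := by
    rw [← hrow i]
    exact Finset.sum_le_sum (fun s _ => self_le_mul_self (B i s))
  have hle : Theta (κ ^ 2 + 1) (κ : ℤ) B i i ≤ 0 := by
    rw [hdiag]; linarith
  have h0 : Theta (κ ^ 2 + 1) (κ : ℤ) B i i = 0 := by
    rcases hθ i i with h | h
    · exact h
    · omega
  have hsum0 : ∑ s, (B i s * B i s - B i s) = 0 := by
    rw [Finset.sum_sub_distrib, hrow i]
    have : ∑ s, B i s * B i s = (κ : ℤ) := by
      rw [hdiag] at h0; linarith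
    rw [this]; ring
  have hterm : B i j * B i j - B i j = 0 := by
    have hnn : ∀ s ∈ Finset.univ, (0 : ℤ) ≤ B i s * B i s - B i s :=
      fun s _ => by linarith [self_le_mul_self (B i s)]
    have := (Finset.sum_eq_zero_iff_of_nonneg hnn).mp hsum0 j (Finset.mem_univ j)
    exact this
  have : B i j * (B i j - 1) = 0 := by ring_nf; linarith [hterm]
  rcases mul_eq_zero.mp this with h | h
  · left; exact h
  · right; linarith

theorem stmt_6 (κ : ℕ) (hκ : 0 < κ)
    (A : Matrix (Fin (κ ^ 2 + 1)) (Fin (κ ^ 2 + 1)) ℤ)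
    (h01 : ∀ i j, A i j = 0 ∨ A i j = 1)
    (hrow : ∀ i, ∑ j, A i j = (κ : ℤ)) (hcol : ∀ j, ∑ i, A i j = (κ : ℤ))
    (m : ℕ) (hm : 0 < m) (hfix : (Theta (κ ^ 2 + 1) (κ : ℤ))^[m] A = A) :
    J2Free A := by
  set T := Theta (κ ^ 2 + 1) (κ : ℤ) with hT
  -- all iterates have row and column sums κ
  have hsums : ∀ t, (∀ i, ∑ j, (T^[t] A) i j = (κ : ℤ)) ∧
      (∀ j, ∑ i, (T^[t] A) i j = (κ : ℤ)) := by
    intro t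
    induction t with
    | zero => exact ⟨hrow, hcol⟩
    | succ t ih =>
        rw [Function.iterate_succ_apply']
        exact theta_sums κ (T^[t] A) ih.1 ih.2
  -- backward induction: every iterate in the cycle is a 0-1 matrix
  have h01iter : ∀ s, s ≤ m → ∀ i j, (T^[m - s] A) i j = 0 ∨ (T^[m - s] A) i j = 1 := by
    intro s
    induction s with
    | zero => intro _ i j; simp only [Nat.sub_zero, hfix]; exact h01 i j
    | succ s ih =>
        intro hs i j
        have ihs := ih (le_of_lt (Nat.lt_of_succ_le hs))
        have hms : m - s = (m - (s + 1)) + 1 := by omega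
        rw [hms, Function.iterate_succ_apply'] at ihs
        exact key_01 κ (T^[m - (s + 1)] A) (hsums (m - (s + 1))).1 ihs i j
  have hTA : ∀ i j, T A i j = 0 ∨ T A i j = 1 := by
    have := h01iter (m - 1) (by omega)
    rw [show m - (m - 1) = 1 from by omega] at this
    simpa using this
  -- now derive J₂-freeness
  rintro ⟨i, l, j, k, hil, hjk, h1, h2, h3, h4⟩
  have hnn : ∀ s ∈ Finset.univ, (0 : ℤ) ≤ A i s * A l s := by
    intro s _
    rcases h01 i s with h | h <;> rcases h01 l s with h' | h' <;> simp [h, h']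
  have hsub : ({j, k} : Finset (Fin (κ ^ 2 + 1))) ⊆ Finset.univ := Finset.subset_univ _
  have h2le : (2 : ℤ) ≤ ∑ s, A i s * A l s := by
    have hpair : ∑ s ∈ ({j, k} : Finset (Fin (κ ^ 2 + 1))), A i s * A l s = 2 := by
      rw [Finset.sum_pair hjk, h1, h2, h3, h4]; ring
    calc (2 : ℤ) = ∑ s ∈ ({j, k} : Finset (Fin (κ ^ 2 + 1))), A i s * A l s := hpair.symm
      _ ≤ ∑ s, A i s * A l s :=
          Finset.sum_le_sum_of_subset_of_nonneg hsub (fun s _ hs => hnn s (Finset.mem_univ s))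
  have hval : T A i l = 1 - ∑ s, A i s * A l s := by
    rw [hT, theta_apply, if_neg hil]; ring
  rcases hTA i l with h | h <;> rw [hval] at h <;> linarith
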